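/- arXiv:1812.11221 — 5 statements merged into one kernel-verified Lean document; each statement's English description precedes it below -/
import Mathlib

section
/- The set S = {t ∈ (0,1) : t is irrational and e_{i+1}(t) ≥ φ^{d_i(t)} for infinitely many i} is uncountable. -/
open Filter Topology

/-- Numerators `c_n` of the convergents of the regular continued fraction
`[0; e 1, e 2, ...]` (the value `e 0` is unused). -/
def cfNum (e : ℕ → ℕ) : ℕ → ℕ
  | 0 => 0
  | 1 => 1
  | n + 2 => e (n + 2) * cfNum e (n + 1) + cfNum e n

/-- Denominators `d_n` of the convergents of the regular continued fraction
`[0; e 1, e 2, ...]`. -/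
def cfDen (e : ℕ → ℕ) : ℕ → ℕ
  | 0 => 1
  | 1 => e 1
  | n + 2 => e (n + 2) * cfDen e (n + 1) + cfDen e n

/-- `t` has regular continued fraction expansion `[0; e 1, e 2, ...]`, i.e. the partial
quotients `e i` (for `i ≥ 1`) are positive integers and the convergents tend to `t`. -/
def IsCFExpansion (t : ℝ) (e : ℕ → ℕ) : Prop :=
  (∀ i, 1 ≤ i → 1 ≤ e i) ∧
    Tendsto (fun n => (cfNum e n : ℝ) / (cfDen e n : ℝ)) atTop (𝓝 t)

/-- The set `S = {t ∈ (0,1) : t irrational, e_{i+1}(t) ≥ φ^{d_i(t)} infinitely often}`,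
where `φ = (√5 + 1)/2`. -/
def rrDivergenceSet : Set ℝ :=
  {t | t ∈ Set.Ioo (0 : ℝ) 1 ∧ Irrational t ∧
    ∃ e : ℕ → ℕ, IsCFExpansion t e ∧
      ∀ N : ℕ, ∃ i ≥ N, ((Real.sqrt 5 + 1) / 2) ^ cfDen e i ≤ (e (i + 1) : ℝ)}

namespace CFAux

variable (e : ℕ → ℕ)

/-- convergents as reals -/
noncomputable def x (n : ℕ) : ℝ := (cfNum e n : ℝ) / (cfDen e n : ℝ)

variable (he : ∀ i, 1 ≤ i → 1 ≤ e i)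
include he

theorem den_pos : ∀ n, 0 < cfDen e n := by
  intro n
  induction n using Nat.twoStepInduction with
  | zero => simp [cfDen]
  | one => simp only [cfDen]; exact he 1 le_rfl
  | more n ih1 ih2 =>
    have := he (n+2) (by omega)
    simp only [cfDen]
    positivity

theorem den_mono : ∀ n, cfDen e n ≤ cfDen e (n + 1) := by
  intro n
  match n with
  | 0 => simpa [cfDen] using he 1 le_rfl
  | n + 1 =>
    have h1 := he (n+2) (by omega)
    have h2 := den_pos e he n
    simp only [cfDen]
    nlinarith

theorem den_strict (n : ℕ) : cfDen e n < cfDen e (n + 2) := by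
  have h1 := he (n+2) (by omega)
  have h2 := den_pos e he (n+1)
  simp only [cfDen]
  nlinarith

theorem den_growth : ∀ n, 2 ^ n ≤ 2 * (cfDen e n * cfDen e (n + 1)) := by
  intro n
  induction n with
  | zero =>
    have := den_pos e he 1
    have := den_pos e he 0
    nlinarith
  | succ n ih =>
    have h1 := he (n+2) (by omega)
    have h2 := den_pos e he n
    have h3 := den_pos e he (n+1)
    have h4 : cfDen e n ≤ cfDen e (n+1) := den_mono e he n
    have h5 : cfDen e (n+2) = e (n+2) * cfDen e (n+1) + cfDen e n := rfl
    calc 2 ^ (n+1) = 2 * 2^n := by ring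
    _ ≤ 2 * (2 * (cfDen e n * cfDen e (n+1))) := by omega
    _ ≤ 2 * (cfDen e (n+1) * cfDen e (n+2)) := by
          have h6 : 2 * cfDen e n ≤ cfDen e (n+2) := by
            have : cfDen e (n+1) ≤ e (n+2) * cfDen e (n+1) := Nat.le_mul_of_pos_left _ (by omega)
            omega
          calc 2 * (2 * (cfDen e n * cfDen e (n+1))) = 2 * (cfDen e (n+1) * (2 * cfDen e n)) := by ring
          _ ≤ 2 * (cfDen e (n+1) * cfDen e (n+2)) := by
              exact Nat.mul_le_mul_left _ (Nat.mul_le_mul_left _ h6)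

omit he in
theorem det : ∀ n, (cfNum e (n+1) : ℝ) * cfDen e n = cfNum e n * cfDen e (n+1) + (-1)^n := by
  intro n
  induction n with
  | zero => simp [cfNum, cfDen]
  | succ n ih =>
    have h1 : cfNum e (n+2) = e (n+2) * cfNum e (n+1) + cfNum e n := rfl
    have h2 : cfDen e (n+2) = e (n+2) * cfDen e (n+1) + cfDen e n := rfl
    rw [h1, h2]
    push_cast
    ring_nf
    ring_nf at ih
    nlinarith [ih]

theorem diff (n : ℕ) : x e (n+1) - x e n = (-1)^n / ((cfDen e n : ℝ) * cfDen e (n+1)) := by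
  have hd1 : (0:ℝ) < cfDen e n := by exact_mod_cast den_pos e he n
  have hd2 : (0:ℝ) < cfDen e (n+1) := by exact_mod_cast den_pos e he (n+1)
  have hdet := det e n
  unfold x
  field_simp
  linear_combination hdet

theorem cauchy : CauchySeq (x e) := by
  apply cauchySeq_of_le_geometric (1/2 : ℝ) 4 (by norm_num)
  intro n
  have hd1 : (0:ℝ) < cfDen e n := by exact_mod_cast den_pos e he n
  have hd2 : (0:ℝ) < cfDen e (n+1) := by exact_mod_cast den_pos e he (n+1)
  have hg : (2:ℝ)^n ≤ 2 * ((cfDen e n : ℝ) * cfDen e (n+1)) := by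
    exact_mod_cast den_growth e he n
  rw [Real.dist_eq, ← neg_sub, abs_neg, diff e he n]
  rw [abs_div, abs_pow, abs_neg, abs_one, one_pow]
  rw [abs_of_pos (by positivity)]
  rw [div_le_iff₀ (by positivity)]
  have h2 : (0:ℝ) < 2^n := by positivity
  have : (4:ℝ) * (1/2)^n * (2^n) = 2*2 := by
    rw [div_pow, one_pow, mul_assoc, div_mul_cancel₀ _ (by positivity : ((2:ℝ)^n) ≠ 0)]
    norm_num
  nlinarith [hg]

theorem sandwich : ∀ k n, 0 < (-1:ℝ)^n * (x e (k + n + 1) - x e n) ∧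
    (-1:ℝ)^n * (x e (k + n + 1) - x e n) ≤ 1/((cfDen e n : ℝ) * cfDen e (n+1)) := by
  intro k
  induction k with
  | zero =>
    intro n
    have hd1 : (0:ℝ) < cfDen e n := by exact_mod_cast den_pos e he n
    have hd2 : (0:ℝ) < cfDen e (n+1) := by exact_mod_cast den_pos e he (n+1)
    have hsq : ((-1:ℝ)^n) * ((-1:ℝ)^n) = 1 := by
      rw [← pow_add]
      exact Even.neg_one_pow (Even.add_self n)
    have h0 : (0:ℕ) + n + 1 = n + 1 := by omega
    rw [h0, diff e he n]
    constructor
    · rw [mul_div_assoc', hsq]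
      positivity
    · rw [mul_div_assoc', hsq]
  | succ k ih =>
    intro n
    have hd1 : (0:ℝ) < cfDen e n := by exact_mod_cast den_pos e he n
    have hd2 : (0:ℝ) < cfDen e (n+1) := by exact_mod_cast den_pos e he (n+1)
    have hd3 : (0:ℝ) < cfDen e (n+2) := by exact_mod_cast den_pos e he (n+2)
    have hlt : (cfDen e n : ℝ) < cfDen e (n+2) := by exact_mod_cast den_strict e he n
    have hsq : ((-1:ℝ)^n) * ((-1:ℝ)^n) = 1 := by
      rw [← pow_add]; exact Even.neg_one_pow (Even.add_self n)
    obtain ⟨ih1, ih2⟩ := ih (n+1)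
    have hps : ((-1:ℝ)^(n+1)) = -(-1:ℝ)^n := by rw [pow_succ]; ring
    rw [hps] at ih1 ih2
    have heq : (k + 1) + n + 1 = k + (n+1) + 1 := by omega
    have hsplit : x e ((k+1) + n + 1) - x e n
        = (x e (k + (n+1) + 1) - x e (n+1)) + (x e (n+1) - x e n) := by
      rw [heq]; ring
    rw [hsplit, diff e he n, mul_add, mul_div_assoc', hsq]
    have hfrac : 1/((cfDen e (n+1) : ℝ) * cfDen e (n+2)) < 1/((cfDen e n : ℝ) * cfDen e (n+1)) := by
      apply one_div_lt_one_div_of_lt (by positivity)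
      nlinarith
    constructor
    · nlinarith [ih2]
    · nlinarith [ih1]

variable (t : ℝ) (ht : Tendsto (x e) atTop (𝓝 t))
include ht

theorem weak_bounds (n : ℕ) : 0 ≤ (-1:ℝ)^n * (t - x e n) ∧
    (-1:ℝ)^n * (t - x e n) ≤ 1/((cfDen e n : ℝ) * cfDen e (n+1)) := by
  have htl : Tendsto (fun k => (-1:ℝ)^n * (x e (k + n + 1) - x e n)) atTop
      (𝓝 ((-1:ℝ)^n * (t - x e n))) := by
    apply Tendsto.const_mul
    exact (ht.comp (tendsto_add_atTop_nat (n+1))).sub tendsto_const_nhds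
  constructor
  · exact ge_of_tendsto' htl fun k => (sandwich e he k n).1.le
  · exact le_of_tendsto' htl fun k => (sandwich e he k n).2

theorem pos_strict (n : ℕ) : 0 < (-1:ℝ)^n * (t - x e n) := by
  have hd1 : (0:ℝ) < cfDen e n := by exact_mod_cast den_pos e he n
  have hd2 : (0:ℝ) < cfDen e (n+1) := by exact_mod_cast den_pos e he (n+1)
  have hd3 : (0:ℝ) < cfDen e (n+2) := by exact_mod_cast den_pos e he (n+2)
  have hlt : (cfDen e n : ℝ) < cfDen e (n+2) := by exact_mod_cast den_strict e he n
  have w := (weak_bounds e he t ht (n+1)).2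
  have hps : ((-1:ℝ)^(n+1)) = -(-1:ℝ)^n := by rw [pow_succ]; ring
  rw [hps] at w
  have hsq : ((-1:ℝ)^n) * ((-1:ℝ)^n) = 1 := by
    rw [← pow_add]; exact Even.neg_one_pow (Even.add_self n)
  have hsplit : (-1:ℝ)^n * (t - x e n)
      = (-1:ℝ)^n * (t - x e (n+1)) + (-1:ℝ)^n * (x e (n+1) - x e n) := by ring
  rw [hsplit, diff e he n, mul_div_assoc', hsq]
  have hfrac : 1/((cfDen e (n+1) : ℝ) * cfDen e (n+2)) < 1/((cfDen e n : ℝ) * cfDen e (n+1)) := by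
    apply one_div_lt_one_div_of_lt (by positivity)
    nlinarith
  nlinarith [w]

theorem upper_strict (n : ℕ) :
    (-1:ℝ)^n * (t - x e n) < 1/((cfDen e n : ℝ) * cfDen e (n+1)) := by
  have hp := pos_strict e he t ht (n+1)
  have hps : ((-1:ℝ)^(n+1)) = -(-1:ℝ)^n := by rw [pow_succ]; ring
  rw [hps] at hp
  have hsq : ((-1:ℝ)^n) * ((-1:ℝ)^n) = 1 := by
    rw [← pow_add]; exact Even.neg_one_pow (Even.add_self n)
  have hsplit : (-1:ℝ)^n * (t - x e n)
      = (-1:ℝ)^n * (t - x e (n+1)) + (-1:ℝ)^n * (x e (n+1) - x e n) := by ring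
  rw [hsplit, diff e he n, mul_div_assoc', hsq]
  nlinarith [hp]

theorem t_pos : 0 < t := by
  have h := pos_strict e he t ht 0
  simpa [x, cfNum, cfDen] using h

theorem t_lt_one : t < 1 := by
  have h := pos_strict e he t ht 1
  have he1 : 1 ≤ e 1 := he 1 le_rfl
  have hx1 : x e 1 = 1 / (e 1 : ℝ) := by simp [x, cfNum, cfDen]
  rw [hx1] at h
  have : (1:ℝ) ≤ e 1 := by exact_mod_cast he1
  have h2 : t < 1 / (e 1 : ℝ) := by nlinarith
  calc t < 1 / (e 1 : ℝ) := h2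
  _ ≤ 1 := by rw [div_le_one (by linarith)]; exact this

theorem t_irrational : Irrational t := by
  rintro ⟨r, hr⟩
  -- find n with r.den < cfDen e (n+1)
  set n := 2 * r.den + 1 with hn
  have hden : r.den < cfDen e (n+1) := by
    by_contra hc
    push_neg at hc
    have h1 := den_growth e he n
    have h2 := den_mono e he n
    have h3 : r.den < 2 ^ r.den := Nat.lt_two_pow_self (n := r.den)
    have h4 : cfDen e n * cfDen e (n+1) ≤ r.den * r.den :=
      Nat.mul_le_mul (le_trans h2 hc) hc
    have h5 : 2 ^ n ≤ 2 * (r.den * r.den) := le_trans h1 (by omega)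
    have h6 : 2 * (r.den * r.den) < 2 * (2 ^ r.den * 2 ^ r.den) := by
      have := Nat.mul_lt_mul_of_lt_of_le h3 h3.le (by positivity)
      omega
    have h7 : 2 * (2 ^ r.den * 2 ^ r.den) = 2 ^ n := by
      rw [hn]; rw [← pow_add]; ring
    omega
  have hd1 : (0:ℝ) < cfDen e n := by exact_mod_cast den_pos e he n
  have hd2 : (0:ℝ) < cfDen e (n+1) := by exact_mod_cast den_pos e he (n+1)
  have hq : (0:ℝ) < (r.den : ℝ) := by exact_mod_cast r.pos
  have hdenR : (r.den : ℝ) < cfDen e (n+1) := by exact_mod_cast hden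
  have hpos := pos_strict e he t ht n
  have hupp := upper_strict e he t ht n
  set y := (-1:ℝ)^n * (t - x e n) with hy
  have habs : |t - x e n| = y := by
    have h1 : |y| = y := abs_of_pos hpos
    have h2 : |y| = |t - x e n| := by
      rw [hy, abs_mul, abs_pow, abs_neg, abs_one, one_pow, one_mul]
    rw [← h2, h1]
  set z : ℤ := r.num * (cfDen e n : ℤ) - (cfNum e n : ℤ) * (r.den : ℤ) with hz
  have hzz : t - x e n = (z : ℝ) / ((r.den : ℝ) * cfDen e n) := by
    rw [hz, ← hr, x, Rat.cast_def]
    push_cast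
    field_simp
  have hzne : z ≠ 0 := by
    intro h0
    rw [h0] at hzz
    simp at hzz
    rw [hzz] at habs
    simp at habs
    rw [← habs] at hpos
    simp at hpos
  have hz1 : (1:ℝ) ≤ |(z:ℝ)| := by
    have h0 : (1:ℤ) ≤ |z| := Int.one_le_abs (by omega)
    rw [← Int.cast_abs]
    exact_mod_cast h0
  have hlow : 1 / ((r.den : ℝ) * cfDen e n) ≤ y := by
    rw [← habs, hzz, abs_div,
      abs_of_pos (show (0:ℝ) < ((r.den:ℝ) * cfDen e n) from by positivity)]
    gcongr
  have hcontr : 1 / ((cfDen e n : ℝ) * cfDen e (n+1)) < 1 / ((r.den : ℝ) * cfDen e n) := by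
    apply one_div_lt_one_div_of_lt (by positivity)
    nlinarith
  linarith

theorem between (n : ℕ) :
    (x e (n+2) - t) * (((cfNum e (n+2) : ℝ) + cfNum e (n+1)) / ((cfDen e (n+2) : ℝ) + cfDen e (n+1)) - t) < 0 := by
  set m : ℝ := ((cfNum e (n+2) : ℝ) + cfNum e (n+1)) / ((cfDen e (n+2) : ℝ) + cfDen e (n+1)) with hm
  set ε : ℝ := (-1:ℝ)^n with hε
  have hsq : ε * ε = 1 := by
    rw [hε, ← pow_add]; exact Even.neg_one_pow (Even.add_self n)
  have hd1 : (0:ℝ) < cfDen e (n+1) := by exact_mod_cast den_pos e he (n+1)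
  have hd2 : (0:ℝ) < cfDen e (n+2) := by exact_mod_cast den_pos e he (n+2)
  have hd3 : (0:ℝ) < cfDen e (n+3) := by exact_mod_cast den_pos e he (n+3)
  have hdle : (cfDen e (n+2) : ℝ) + cfDen e (n+1) ≤ cfDen e (n+3) := by
    have h1 : cfDen e (n+3) = e (n+3) * cfDen e (n+2) + cfDen e (n+1) := rfl
    have h2 : 1 ≤ e (n+3) := he (n+3) (by omega)
    have : cfDen e (n+2) + cfDen e (n+1) ≤ cfDen e (n+3) := by
      rw [h1]
      have : cfDen e (n+2) ≤ e (n+3) * cfDen e (n+2) := Nat.le_mul_of_pos_left _ (by omega)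
      omega
    exact_mod_cast this
  have hpos := pos_strict e he t ht (n+2)
  have hupp := upper_strict e he t ht (n+2)
  have hε2 : (-1:ℝ)^(n+2) = ε := by rw [hε, pow_add]; norm_num
  rw [hε2] at hpos hupp
  have hdet := det e (n+1)
  have hps : ((-1:ℝ)^(n+1)) = -ε := by rw [hε, pow_succ]; ring
  rw [hps] at hdet
  have hdet' : (cfNum e (n+2) : ℝ) * cfDen e (n+1) = (cfNum e (n+1) : ℝ) * cfDen e (n+2) + -ε := hdet
  have hmx : m - x e (n+2) = ε / ((cfDen e (n+2) : ℝ) * ((cfDen e (n+2) : ℝ) + cfDen e (n+1))) := by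
    rw [hm, x, div_sub_div _ _ (show ((cfDen e (n+2) : ℝ) + cfDen e (n+1)) ≠ 0 from by positivity) hd2.ne']
    rw [show ((cfNum e (n+2):ℝ) + cfNum e (n+1)) * (cfDen e (n+2))
        - ((cfDen e (n+2):ℝ) + cfDen e (n+1)) * (cfNum e (n+2)) = ε from by linear_combination (-1:ℝ) * hdet']
    rw [mul_comm ((cfDen e (n+2):ℝ) + cfDen e (n+1)) ((cfDen e (n+2):ℝ))]
  have hfr : 1 / ((cfDen e (n+2) : ℝ) * cfDen e (n+3))
      ≤ 1 / ((cfDen e (n+2) : ℝ) * ((cfDen e (n+2) : ℝ) + cfDen e (n+1))) := by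
    apply one_div_le_one_div_of_le (by positivity)
    nlinarith
  have h1 : ε * (m - t) > 0 := by
    have : ε * (m - t) = ε * (m - x e (n+2)) - ε * (t - x e (n+2)) := by ring
    rw [this, hmx, mul_div_assoc', hsq]
    have := lt_of_lt_of_le hupp hfr
    linarith
  have h2 : ε * (x e (n+2) - t) < 0 := by linarith [hpos]
  have : (x e (n+2) - t) * (m - t) = (ε * (x e (n+2) - t)) * (ε * (m - t)) := by
    rw [show (ε * (x e (n+2) - t)) * (ε * (m - t)) = (ε * ε) * ((x e (n+2) - t) * (m - t)) by ring, hsq, one_mul]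
  rw [this]
  exact mul_neg_of_neg_of_pos h2 h1

end CFAux

/-- congruence: cfNum/cfDen only depend on the first values of e -/
theorem cf_congr (e e' : ℕ → ℕ) :
    ∀ n, (∀ k, k ≤ n → e k = e' k) → cfNum e n = cfNum e' n ∧ cfDen e n = cfDen e' n := by
  intro n
  induction n using Nat.twoStepInduction with
  | zero => intro _; exact ⟨rfl, rfl⟩
  | one => intro h; exact ⟨rfl, by simp [cfDen, h 1 le_rfl]⟩
  | more n ih1 ih2 =>
    intro h
    have h1 := ih1 (fun k hk => h k (by omega))
    have h2 := ih2 (fun k hk => h k (by omega))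
    constructor
    · show e (n+2) * cfNum e (n+1) + cfNum e n = e' (n+2) * cfNum e' (n+1) + cfNum e' n
      rw [h (n+2) le_rfl, h1.1, h2.1]
    · show e (n+2) * cfDen e (n+1) + cfDen e n = e' (n+2) * cfDen e' (n+1) + cfDen e' n
      rw [h (n+2) le_rfl, h1.2, h2.2]

/-- The auxiliary recursion: `stepE σ n = (e_{n+1}, d_{n+1}, d_n)`. -/
def stepE (σ : ℕ → Bool) : ℕ → ℕ × ℕ × ℕ
  | 0 => (2, 2, 1)
  | n+1 =>
    ((2 ^ (stepE σ n).2.1 + cond (σ n) 1 0),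
     (2 ^ (stepE σ n).2.1 + cond (σ n) 1 0) * (stepE σ n).2.1 + (stepE σ n).2.2,
     (stepE σ n).2.1)

/-- The partial quotients determined by a boolean sequence. -/
def ePhi (σ : ℕ → Bool) (n : ℕ) : ℕ := if n = 0 then 1 else (stepE σ (n-1)).1

theorem stepE_fst_pos (σ : ℕ → Bool) : ∀ n, 1 ≤ (stepE σ n).1
  | 0 => by simp [stepE]
  | n+1 => by
    show 1 ≤ 2 ^ (stepE σ n).2.1 + cond (σ n) 1 0
    have : 1 ≤ 2 ^ (stepE σ n).2.1 := Nat.one_le_two_pow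
    omega

theorem ePhi_pos (σ : ℕ → Bool) : ∀ i, 1 ≤ i → 1 ≤ ePhi σ i := by
  intro i hi
  match i, hi with
  | n+1, _ => exact stepE_fst_pos σ n

theorem den_eq (σ : ℕ → Bool) :
    ∀ n, cfDen (ePhi σ) (n+1) = (stepE σ n).2.1 ∧ cfDen (ePhi σ) n = (stepE σ n).2.2 := by
  intro n
  induction n with
  | zero => exact ⟨rfl, rfl⟩
  | succ n ih =>
    constructor
    · show ePhi σ (n+2) * cfDen (ePhi σ) (n+1) + cfDen (ePhi σ) n = (stepE σ (n+1)).2.1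
      have h1 : ePhi σ (n+2) = (stepE σ (n+1)).1 := rfl
      rw [h1, ih.1, ih.2]
      rfl
    · show cfDen (ePhi σ) (n+1) = (stepE σ (n+1)).2.2
      rw [ih.1]
      rfl

theorem ePhi_big (σ : ℕ → Bool) : ∀ i, 2 ^ cfDen (ePhi σ) i ≤ ePhi σ (i+1) := by
  intro i
  match i with
  | 0 => simp [ePhi, cfDen, stepE]
  | n+1 =>
    show 2 ^ cfDen (ePhi σ) (n+1) ≤ (stepE σ (n+1)).1
    rw [(den_eq σ n).1]
    show 2 ^ (stepE σ n).2.1 ≤ 2 ^ (stepE σ n).2.1 + cond (σ n) 1 0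
    omega

theorem stepE_congr (σ σ' : ℕ → Bool) (i : ℕ) (h : ∀ m, m < i → σ m = σ' m) :
    ∀ k, k ≤ i → stepE σ k = stepE σ' k := by
  intro k
  induction k with
  | zero => intro _; rfl
  | succ k ih =>
    intro hk
    show ((2 ^ (stepE σ k).2.1 + cond (σ k) 1 0),
     (2 ^ (stepE σ k).2.1 + cond (σ k) 1 0) * (stepE σ k).2.1 + (stepE σ k).2.2,
     (stepE σ k).2.1) = _
    rw [ih (by omega), h k (by omega)]
    rfl

theorem ePhi_congr (σ σ' : ℕ → Bool) (i : ℕ) (h : ∀ m, m < i → σ m = σ' m) :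
    ∀ k, k ≤ i + 1 → ePhi σ k = ePhi σ' k := by
  intro k hk
  match k, hk with
  | 0, _ => rfl
  | k+1, hk =>
    show (stepE σ k).1 = (stepE σ' k).1
    rw [stepE_congr σ σ' i h k (by omega)]

theorem phi_le (σ : ℕ → Bool) (i : ℕ) :
    ((Real.sqrt 5 + 1)/2) ^ cfDen (ePhi σ) i ≤ (ePhi σ (i+1) : ℝ) := by
  have h5 : Real.sqrt 5 ≤ 3 := by
    nlinarith [Real.sq_sqrt (show (0:ℝ) ≤ 5 by norm_num), Real.sqrt_nonneg 5]
  have hb : (Real.sqrt 5 + 1)/2 ≤ 2 := by linarith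
  have h0 : (0:ℝ) ≤ (Real.sqrt 5 + 1)/2 := by positivity
  calc ((Real.sqrt 5 + 1)/2) ^ cfDen (ePhi σ) i ≤ 2 ^ cfDen (ePhi σ) i :=
        pow_le_pow_left₀ h0 hb _
  _ = ((2 ^ cfDen (ePhi σ) i : ℕ) : ℝ) := by push_cast; ring
  _ ≤ (ePhi σ (i+1) : ℝ) := by exact_mod_cast ePhi_big σ i

theorem exists_limit (σ : ℕ → Bool) :
    ∃ t, t ∈ rrDivergenceSet ∧ Tendsto (CFAux.x (ePhi σ)) atTop (𝓝 t) := by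
  have he := ePhi_pos σ
  obtain ⟨t, ht⟩ := cauchySeq_tendsto_of_complete (CFAux.cauchy (ePhi σ) he)
  exact ⟨t, ⟨⟨CFAux.t_pos _ he t ht, CFAux.t_lt_one _ he t ht⟩,
    CFAux.t_irrational _ he t ht,
    ePhi σ, ⟨he, ht⟩, fun N => ⟨N, le_rfl, phi_le σ N⟩⟩, ht⟩

theorem tri_absurd (A B C u : ℝ) (h1 : (A - u) * (B - u) < 0)
    (h2 : (B - u) * (C - u) < 0) (h3 : (A - B) * (C - B) < 0) : False := by
  rcases mul_neg_iff.1 h1 with ⟨hA, hB⟩ | ⟨hA, hB⟩ <;>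
    rcases mul_neg_iff.1 h2 with ⟨hB', hC⟩ | ⟨hB', hC⟩ <;>
      rcases mul_neg_iff.1 h3 with ⟨hAB, hCB⟩ | ⟨hAB, hCB⟩ <;> linarith

theorem distinct (σ σ' : ℕ → Bool) (i : ℕ) (hmin : ∀ m, m < i → σ m = σ' m)
    (h1 : σ i = false) (h2 : σ' i = true) (u v : ℝ)
    (hu : Tendsto (CFAux.x (ePhi σ)) atTop (𝓝 u))
    (hv : Tendsto (CFAux.x (ePhi σ')) atTop (𝓝 v)) : u ≠ v := by
  intro huv
  subst huv
  have he := ePhi_pos σ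
  have he' := ePhi_pos σ'
  -- shared data
  have hstep : stepE σ i = stepE σ' i := stepE_congr σ σ' i hmin i le_rfl
  have hagree : ∀ k, k ≤ i + 1 → ePhi σ k = ePhi σ' k := ePhi_congr σ σ' i hmin
  have hcf := cf_congr (ePhi σ) (ePhi σ') (i+1) hagree
  have hcf' := cf_congr (ePhi σ) (ePhi σ') i (fun k hk => hagree k (by omega))
  -- quotients at i+2
  have hee : ePhi σ' (i+2) = ePhi σ (i+2) + 1 := by
    show (stepE σ' (i+1)).1 = (stepE σ (i+1)).1 + 1
    show 2 ^ (stepE σ' i).2.1 + cond (σ' i) 1 0 = 2 ^ (stepE σ i).2.1 + cond (σ i) 1 0 + 1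
    rw [hstep, h1, h2]
    simp
  set P : ℝ := (cfNum (ePhi σ) (i+1) : ℝ) with hP
  set p : ℝ := (cfNum (ePhi σ) i : ℝ) with hp
  set Q : ℝ := (cfDen (ePhi σ) (i+1) : ℝ) with hQ
  set q : ℝ := (cfDen (ePhi σ) i : ℝ) with hq
  set s : ℝ := (ePhi σ (i+2) : ℝ) with hs
  have hs1 : 1 ≤ s := by rw [hs]; exact_mod_cast he (i+2) (by omega)
  have hQ0 : 0 < Q := by rw [hQ]; exact_mod_cast CFAux.den_pos _ he (i+1)
  have hq0 : 0 < q := by rw [hq]; exact_mod_cast CFAux.den_pos _ he i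
  -- determinant
  set ε : ℝ := (-1:ℝ)^i with hε
  have hsq : ε * ε = 1 := by rw [hε, ← pow_add]; exact Even.neg_one_pow (Even.add_self i)
  have hdet : P * q = p * Q + ε := CFAux.det (ePhi σ) i
  -- the three points
  set A : ℝ := (s * P + p) / (s * Q + q) with hA
  set B : ℝ := ((s+1) * P + p) / ((s+1) * Q + q) with hB
  set C : ℝ := ((s+2) * P + p) / ((s+2) * Q + q) with hC
  have hD1 : 0 < s * Q + q := by nlinarith
  have hD2 : 0 < (s+1) * Q + q := by nlinarith
  have hD3 : 0 < (s+2) * Q + q := by nlinarith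
  -- identify convergents/mediants
  have hxA : CFAux.x (ePhi σ) (i+2) = A := by
    rw [CFAux.x, hA]
    have hnum : cfNum (ePhi σ) (i+2) = ePhi σ (i+2) * cfNum (ePhi σ) (i+1) + cfNum (ePhi σ) i := rfl
    have hden : cfDen (ePhi σ) (i+2) = ePhi σ (i+2) * cfDen (ePhi σ) (i+1) + cfDen (ePhi σ) i := rfl
    rw [hnum, hden, hP, hp, hQ, hq, hs]
    push_cast
    ring_nf
  have hMB : ((cfNum (ePhi σ) (i+2) : ℝ) + cfNum (ePhi σ) (i+1)) /
      ((cfDen (ePhi σ) (i+2) : ℝ) + cfDen (ePhi σ) (i+1)) = B := by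
    rw [hB]
    have hnum : cfNum (ePhi σ) (i+2) = ePhi σ (i+2) * cfNum (ePhi σ) (i+1) + cfNum (ePhi σ) i := rfl
    have hden : cfDen (ePhi σ) (i+2) = ePhi σ (i+2) * cfDen (ePhi σ) (i+1) + cfDen (ePhi σ) i := rfl
    rw [hnum, hden, hP, hp, hQ, hq, hs]
    push_cast
    ring_nf
  have hxB : CFAux.x (ePhi σ') (i+2) = B := by
    rw [CFAux.x, hB]
    have hnum : cfNum (ePhi σ') (i+2) = ePhi σ' (i+2) * cfNum (ePhi σ') (i+1) + cfNum (ePhi σ') i := rfl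
    have hden : cfDen (ePhi σ') (i+2) = ePhi σ' (i+2) * cfDen (ePhi σ') (i+1) + cfDen (ePhi σ') i := rfl
    rw [hnum, hden, hee, ← hcf.1, ← hcf.2, ← hcf'.1, ← hcf'.2, hP, hp, hQ, hq, hs]
    push_cast
    ring_nf
  have hMC : ((cfNum (ePhi σ') (i+2) : ℝ) + cfNum (ePhi σ') (i+1)) /
      ((cfDen (ePhi σ') (i+2) : ℝ) + cfDen (ePhi σ') (i+1)) = C := by
    rw [hC]
    have hnum : cfNum (ePhi σ') (i+2) = ePhi σ' (i+2) * cfNum (ePhi σ') (i+1) + cfNum (ePhi σ') i := rfl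
    have hden : cfDen (ePhi σ') (i+2) = ePhi σ' (i+2) * cfDen (ePhi σ') (i+1) + cfDen (ePhi σ') i := rfl
    rw [hnum, hden, hee, ← hcf.1, ← hcf.2, ← hcf'.1, ← hcf'.2, hP, hp, hQ, hq, hs]
    push_cast
    ring_nf
  -- betweenness
  have hbet1 : (A - u) * (B - u) < 0 := by
    have := CFAux.between (ePhi σ) he u hu i
    rwa [hxA, hMB] at this
  have hbet2 : (B - u) * (C - u) < 0 := by
    have := CFAux.between (ePhi σ') he' u hv i
    rwa [hxB, hMC] at this
  -- monotonicity
  have hAB : A - B = -ε / ((s * Q + q) * ((s+1) * Q + q)) := by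
    rw [hA, hB, div_sub_div _ _ hD1.ne' hD2.ne']
    rw [show (s * P + p) * ((s+1) * Q + q) - (s * Q + q) * ((s+1) * P + p) = -ε from by
      linear_combination (-1:ℝ) * hdet]
  have hCB : C - B = ε / ((s+2) * Q + q) / ((s+1) * Q + q) * 1 := by
    rw [hC, hB, div_sub_div _ _ hD3.ne' hD2.ne']
    rw [show ((s+2) * P + p) * ((s+1) * Q + q) - ((s+2) * Q + q) * ((s+1) * P + p) = ε from by
      linear_combination hdet]
    rw [div_div, mul_one]
  have hmon : (A - B) * (C - B) < 0 := by
    rw [hAB, hCB, mul_one, div_div]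
    rw [div_mul_div_comm]
    rw [show -ε * ε = -1 from by rw [neg_mul, hsq]]
    apply div_neg_of_neg_of_pos (by norm_num)
    positivity
  exact tri_absurd A B C u hbet1 hbet2 hmon

theorem stmt1 : ¬ rrDivergenceSet.Countable := by
  intro hS
  classical
  choose Φ hmem hlim using exists_limit
  have hinj : Function.Injective Φ := by
    intro σ σ' h
    by_contra hne
    have hex : ∃ n, σ n ≠ σ' n := by
      by_contra hc; push_neg at hc; exact hne (funext hc)
    have hdiff : σ (Nat.find hex) ≠ σ' (Nat.find hex) := Nat.find_spec hex
    have hmin : ∀ m, m < Nat.find hex → σ m = σ' m := fun m hm => by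
      have := Nat.find_min hex hm; simpa using this
    cases hσ : σ (Nat.find hex)
    · have hσ' : σ' (Nat.find hex) = true := by
        cases hb : σ' (Nat.find hex)
        · exact absurd (hσ.trans hb.symm) hdiff
        · rfl
      exact distinct σ σ' (Nat.find hex) hmin hσ hσ' _ _ (hlim σ) (hlim σ') h
    · have hσ' : σ' (Nat.find hex) = false := by
        cases hb : σ' (Nat.find hex)
        · rfl
        · exact absurd (hσ.trans hb.symm) hdiff
      exact distinct σ' σ (Nat.find hex) (fun m hm => (hmin m hm).symm) hσ' hσ _ _
        (hlim σ') (hlim σ) h.symm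
  have hc : (Set.range Φ).Countable := hS.mono (by rintro _ ⟨σ, rfl⟩; exact hmem σ)
  haveI := hc.to_subtype
  haveI : Countable (ℕ → Bool) := Countable.of_equiv _ (Equiv.ofInjective Φ hinj).symm
  obtain ⟨f, hf⟩ := exists_injective_nat (ℕ → Bool)
  have hginj : Function.Injective (fun A : Set ℕ => f (fun n => decide (n ∈ A))) := by
    intro A B hAB
    have h2 := hf hAB
    ext n
    exact decide_eq_decide.mp (congrFun h2 n)
  exact Function.cantor_injective _ hginj
end

section
/- The set S = {t ∈ (0,1) : t is irrational and e_{i+1}(t) ≥ φ^{d_i(t)} for infinitely many i} has Lebesgue measure zero. -/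
open Filter Topology

namespace RRAux

variable (e : ℕ → ℕ)

lemma cfDen_pos (he : ∀ i, 1 ≤ i → 1 ≤ e i) : ∀ n, 1 ≤ cfDen e n
  | 0 => le_refl 1
  | 1 => he 1 le_rfl
  | n + 2 => le_trans (cfDen_pos he n) (Nat.le_add_left _ _)

lemma le_two_mul_cfDen (he : ∀ i, 1 ≤ i → 1 ≤ e i) : ∀ n, n ≤ 2 * cfDen e n
  | 0 => by simp
  | 1 => by have := cfDen_pos e he 1; omega
  | n + 2 => by
      have h := le_two_mul_cfDen he n
      have h1 := cfDen_pos e he (n+1)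
      have he2 := he (n+2) (by omega)
      have : 1 * 1 ≤ e (n+2) * cfDen e (n+1) := Nat.mul_le_mul he2 h1
      show n + 2 ≤ 2 * (e (n+2) * cfDen e (n+1) + cfDen e n)
      omega

lemma cfDen_succ_ge (he : ∀ i, 1 ≤ i → 1 ≤ e i) :
    ∀ i, e (i+1) * cfDen e i ≤ cfDen e (i+1)
  | 0 => by simp [cfDen]
  | i + 1 => Nat.le_add_right _ _

lemma cfDet : ∀ n, (cfNum e (n+1) : ℤ) * cfDen e n - cfNum e n * cfDen e (n+1) = (-1)^n
  | 0 => by simp [cfNum, cfDen]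
  | n + 1 => by
      have ih := cfDet n
      show (cfNum e (n+2) : ℤ) * cfDen e (n+1) - cfNum e (n+1) * cfDen e (n+2) = (-1)^(n+1)
      simp only [cfNum, cfDen]
      push_cast
      linear_combination -ih

noncomputable def cv (n : ℕ) : ℝ := (cfNum e n : ℝ) / (cfDen e n)

variable (he : ∀ i, 1 ≤ i → 1 ≤ e i)
include he

lemma den_pos' (n : ℕ) : (0:ℝ) < cfDen e n := by exact_mod_cast cfDen_pos e he n

lemma cv_diff (n : ℕ) :
    cv e (n+1) - cv e n = (-1)^n / ((cfDen e n : ℝ) * cfDen e (n+1)) := by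
  have d0 := den_pos' e he n
  have d1 := den_pos' e he (n+1)
  have hdet : (cfNum e (n+1) : ℝ) * cfDen e n - cfNum e n * cfDen e (n+1) = (-1)^n := by
    exact_mod_cast congrArg (fun z : ℤ => (z : ℝ)) (cfDet e n)
  unfold cv
  field_simp
  linear_combination hdet

lemma cv_rec (m : ℕ) :
    (cfDen e (m+2) : ℝ) * cv e (m+2)
      = ((e (m+2) : ℝ) * cfDen e (m+1)) * cv e (m+1) + (cfDen e m : ℝ) * cv e m := by
  have hc : ∀ j, (cfDen e j : ℝ) * cv e j = cfNum e j := by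
    intro j
    have := den_pos' e he j
    unfold cv
    field_simp
  rw [show ((e (m+2) : ℝ) * cfDen e (m+1)) * cv e (m+1)
      = (e (m+2) : ℝ) * ((cfDen e (m+1) : ℝ) * cv e (m+1)) from by ring, hc, hc, hc]
  show ((cfNum e (m+2) : ℕ) : ℝ) = _
  simp only [cfNum, cfDen]
  push_cast
  ring

lemma cv_mem (n : ℕ) :
    ∀ k, cv e (n+k) ∈ Set.Icc (min (cv e n) (cv e (n+1))) (max (cv e n) (cv e (n+1)))
  | 0 => ⟨min_le_left _ _, le_max_left _ _⟩
  | 1 => ⟨min_le_right _ _, le_max_right _ _⟩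
  | k + 2 => by
      obtain ⟨h1l, h1r⟩ := cv_mem n (k+1)
      obtain ⟨h0l, h0r⟩ := cv_mem n k
      rw [show n+(k+1) = n+k+1 from by omega] at h1l h1r
      have hrec := cv_rec e he (n+k)
      have ha : (0:ℝ) < (e (n+k+2) : ℝ) * cfDen e (n+k+1) := by
        have h1 := den_pos' e he (n+k+1)
        have h2 : (1:ℝ) ≤ e (n+k+2) := by exact_mod_cast he (n+k+2) (by omega)
        nlinarith
      have hb := den_pos' e he (n+k)
      have hd : (cfDen e (n+k+2) : ℝ) = (e (n+k+2) : ℝ) * cfDen e (n+k+1) + cfDen e (n+k) := by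
        show ((cfDen e (n+k+2) : ℕ) : ℝ) = _
        simp only [cfDen]; push_cast; ring
      have hdd := den_pos' e he (n+k+2)
      have hgoal : n + (k+2) = (n+k) + 2 := by omega
      rw [hgoal]
      set a : ℝ := (e (n+k+2) : ℝ) * cfDen e (n+k+1) with ha_def
      set b : ℝ := (cfDen e (n+k) : ℝ) with hb_def
      have hrec' : (a + b) * cv e (n+k+2) = a * cv e (n+k+1) + b * cv e (n+k) := by
        rw [← hd]; exact hrec
      have hab : (0:ℝ) < a + b := by linarith
      constructor
      · have : (a+b) * (cv e n ⊓ cv e (n+1)) ≤ (a+b) * cv e (n+k+2) := by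
          calc (a+b) * (cv e n ⊓ cv e (n+1)) = a * (cv e n ⊓ cv e (n+1)) + b * (cv e n ⊓ cv e (n+1)) := by ring
            _ ≤ a * cv e (n+k+1) + b * cv e (n+k) :=
                add_le_add (mul_le_mul_of_nonneg_left h1l ha.le) (mul_le_mul_of_nonneg_left h0l hb.le)
            _ = (a+b) * cv e (n+k+2) := hrec'.symm
        exact le_of_mul_le_mul_left this hab
      · have : (a+b) * cv e (n+k+2) ≤ (a+b) * (cv e n ⊔ cv e (n+1)) := by
          calc (a+b) * cv e (n+k+2) = a * cv e (n+k+1) + b * cv e (n+k) := hrec'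
            _ ≤ a * (cv e n ⊔ cv e (n+1)) + b * (cv e n ⊔ cv e (n+1)) :=
                add_le_add (mul_le_mul_of_nonneg_left h1r ha.le) (mul_le_mul_of_nonneg_left h0r hb.le)
            _ = (a+b) * (cv e n ⊔ cv e (n+1)) := by ring
        exact le_of_mul_le_mul_left this hab

lemma dist_lim {t : ℝ} (ht : Tendsto (cv e) atTop (𝓝 t)) (n : ℕ) :
    |t - cv e n| ≤ 1 / ((cfDen e n : ℝ) * cfDen e (n+1)) := by
  have hmem : t ∈ Set.Icc (min (cv e n) (cv e (n+1))) (max (cv e n) (cv e (n+1))) := by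
    refine isClosed_Icc.mem_of_tendsto ht ?_
    filter_upwards [eventually_ge_atTop n] with m hm
    obtain ⟨k, rfl⟩ := Nat.exists_eq_add_of_le hm
    exact cv_mem e he n k
  obtain ⟨hl, hr⟩ := hmem
  have hdiff : |cv e (n+1) - cv e n| = 1 / ((cfDen e n : ℝ) * cfDen e (n+1)) := by
    rw [cv_diff e he n, abs_div, abs_pow, abs_neg, abs_one, one_pow,
      abs_of_pos (mul_pos (den_pos' e he n) (den_pos' e he (n+1)))]
  have h1 : max (cv e n) (cv e (n+1)) - min (cv e n) (cv e (n+1))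
      = |cv e (n+1) - cv e n| := by
    rw [max_sub_min_eq_abs, abs_sub_comm]
  have h2 : min (cv e n) (cv e (n+1)) ≤ cv e n := min_le_left _ _
  have h3 : cv e n ≤ max (cv e n) (cv e (n+1)) := le_max_left _ _
  rw [abs_sub_le_iff]
  constructor <;> linarith [hdiff ▸ h1]

end RRAux

namespace RRAux2
open RRAux MeasureTheory

noncomputable def phi : ℝ := (Real.sqrt 5 + 1) / 2

lemma one_lt_phi : (3/2 : ℝ) ≤ phi := by
  have h5 : (2:ℝ) ≤ Real.sqrt 5 := by
    nlinarith [Real.sq_sqrt (by norm_num : (0:ℝ) ≤ 5), Real.sqrt_nonneg 5]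
  unfold phi; linarith

noncomputable def Aset (q : ℕ) : Set ℝ :=
  ⋃ p ∈ Finset.range (2*q+1), Metric.closedBall ((p:ℝ)/q) (1/((q:ℝ)^2 * phi^q))

lemma vol_Aset (q : ℕ) : volume (Aset q) ≤ ENNReal.ofReal (6 * (1/phi)^q) := by
  have hphi := one_lt_phi
  have hphipow : (0:ℝ) < phi ^ q := by positivity
  have hr : (0:ℝ) ≤ 1/((q:ℝ)^2 * phi^q) := by positivity
  calc volume (Aset q) ≤ ∑ p ∈ Finset.range (2*q+1),
        volume (Metric.closedBall ((p:ℝ)/q) (1/((q:ℝ)^2 * phi^q))) :=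
      measure_biUnion_finset_le _ _
    _ = (2*q+1 : ℕ) * ENNReal.ofReal (2 * (1/((q:ℝ)^2 * phi^q))) := by
        simp [Real.volume_closedBall, Finset.sum_const]
    _ = ENNReal.ofReal ((2*q+1 : ℕ) * (2 * (1/((q:ℝ)^2 * phi^q)))) := by
        rw [← ENNReal.ofReal_natCast (2*q+1), ← ENNReal.ofReal_mul (by positivity)]
    _ ≤ ENNReal.ofReal (6 * (1/phi)^q) := by
        apply ENNReal.ofReal_le_ofReal
        rcases Nat.eq_zero_or_pos q with rfl | hq
        · norm_num
        · have hq1 : (1:ℝ) ≤ (q:ℝ) := by exact_mod_cast hq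
          have hpow : ((1:ℝ)/phi)^q = 1/phi^q := by rw [div_pow, one_pow]
          have key : ((2*q+1:ℕ):ℝ) * (2 * (1/((q:ℝ)^2*phi^q)))
              = (4*(q:ℝ)+2)/((q:ℝ)^2*phi^q) := by push_cast; ring
          rw [key, hpow]
          have h6 : 6*((1:ℝ)/phi^q) = 6/phi^q := by ring
          rw [h6, div_le_div_iff₀ (by positivity) hphipow]
          have hcoef : (0:ℝ) ≤ 6*(q:ℝ)^2 - (4*(q:ℝ)+2) := by nlinarith
          nlinarith [mul_nonneg hcoef hphipow.le]
    
lemma tsum_vol : (∑' q, volume (Aset q)) ≠ ⊤ := by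
  have hsum : Summable (fun q : ℕ => 6 * (1/phi)^q) := by
    apply Summable.mul_left
    apply summable_geometric_of_lt_one
        (le_of_lt (one_div_pos.mpr (by linarith [one_lt_phi])))
    rw [div_lt_one (by linarith [one_lt_phi])]
    linarith [one_lt_phi]
  have hle : (∑' q, volume (Aset q)) ≤ ENNReal.ofReal (∑' q, 6 * (1/phi)^q) := by
    calc (∑' q, volume (Aset q)) ≤ ∑' q, ENNReal.ofReal (6 * (1/phi)^q) :=
        ENNReal.tsum_le_tsum vol_Aset
      _ = ENNReal.ofReal (∑' q, 6 * (1/phi)^q) := by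
          rw [ENNReal.ofReal_tsum_of_nonneg
            (fun q => mul_nonneg (by norm_num)
              (pow_nonneg (le_of_lt (one_div_pos.mpr (by linarith [one_lt_phi]))) q)) hsum]
  exact ne_top_of_le_ne_top ENNReal.ofReal_ne_top hle

end RRAux2

open RRAux RRAux2 MeasureTheory in
theorem stmt2' : MeasureTheory.volume
    {t | t ∈ Set.Ioo (0 : ℝ) 1 ∧ Irrational t ∧
    ∃ e : ℕ → ℕ, IsCFExpansion t e ∧
      ∀ N : ℕ, ∃ i ≥ N, ((Real.sqrt 5 + 1) / 2) ^ cfDen e i ≤ (e (i + 1) : ℝ)} = 0 := by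
  have hzero : volume (limsup Aset atTop) = 0 :=
    measure_limsup_atTop_eq_zero tsum_vol
  refine measure_mono_null ?_ hzero
  rintro t ⟨⟨ht0, ht1⟩, -, e, ⟨he, hconv⟩, hio⟩
  rw [mem_limsup_iff_frequently_mem, frequently_atTop]
  intro N
  obtain ⟨i, hiN, hbig⟩ := hio (2*N)
  have hconv' : Tendsto (cv e) atTop (𝓝 t) := hconv
  have hdistbound := dist_lim e he hconv' i
  have dpos : (0:ℝ) < cfDen e i := den_pos' e he i
  have dpos1 : (0:ℝ) < cfDen e (i+1) := den_pos' e he (i+1)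
  have h1i : (1:ℝ) ≤ cfDen e i := by exact_mod_cast cfDen_pos e he i
  have h1i' : (1:ℝ) ≤ cfDen e (i+1) := by exact_mod_cast cfDen_pos e he (i+1)
  have hphi := one_lt_phi
  have hphipos : (0:ℝ) < phi ^ cfDen e i := by positivity
  have hbig' : phi ^ cfDen e i ≤ (e (i+1) : ℝ) := hbig
  have hd1 : (e (i+1) : ℝ) * cfDen e i ≤ cfDen e (i+1) := by
    exact_mod_cast cfDen_succ_ge e he i
  have hq : phi ^ cfDen e i * cfDen e i ≤ (cfDen e (i+1) : ℝ) :=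
    le_trans (mul_le_mul_of_nonneg_right hbig' dpos.le) hd1
  have hrr : 1/((cfDen e i:ℝ) * cfDen e (i+1))
      ≤ 1/((cfDen e i:ℝ)^2 * phi ^ cfDen e i) := by
    apply one_div_le_one_div_of_le (by positivity)
    nlinarith [mul_le_mul_of_nonneg_left hq dpos.le]
  have hdist : |t - cv e i| ≤ 1/((cfDen e i:ℝ)^2 * phi ^ cfDen e i) :=
    le_trans hdistbound hrr
  have hle1 : 1/((cfDen e i:ℝ) * cfDen e (i+1)) ≤ 1 := by
    rw [div_le_one (by positivity)]; nlinarith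
  have hcv : cv e i < 2 := by
    have h := abs_le.mp (le_trans hdistbound hle1)
    linarith [h.2]
  have hnum : cfNum e i ≤ 2 * cfDen e i := by
    by_contra h
    push_neg at h
    have hc : (2:ℝ) * cfDen e i + 1 ≤ cfNum e i := by exact_mod_cast h
    have : (2:ℝ) ≤ cv e i := by
      unfold RRAux.cv
      rw [le_div_iff₀ dpos]
      nlinarith
    linarith
  refine ⟨cfDen e i, ?_, ?_⟩
  · have := le_two_mul_cfDen e he i; omega
  · unfold Aset
    simp only [Set.mem_iUnion, Finset.mem_range, exists_prop]
    refine ⟨cfNum e i, by omega, ?_⟩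
    rw [Metric.mem_closedBall, Real.dist_eq]
    exact hdist

theorem stmt2 : MeasureTheory.volume rrDivergenceSet = 0 := stmt2'
end

section
/- Let m be an odd positive integer and let x be a primitive m-th root of unity in ℂ. Then |χ_{2m−1}(x)| = 1, where χ_n(q) = ∏_{i=1}^n a_i(q) and a_{2k-1}(q) = q^{2k-1}, a_{2k}(q) = q^k + q^{2k} are the partial numerators of the Ramanujan–Selberg continued fraction S₁. -/
/-- Partial numerators of the Ramanujan–Selberg continued fraction `S₁`:
`a_{2k-1}(q) = q^{2k-1}` and `a_{2k}(q) = q^k + q^{2k}`. -/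
noncomputable def s1a (q : ℂ) (n : ℕ) : ℂ :=
  if n % 2 = 1 then q ^ n else q ^ (n / 2) + q ^ n

lemma s1a_prod_range (x : ℂ) (n : ℕ) :
    ∏ i ∈ Finset.range (2 * n), s1a x i =
      x ^ (n ^ 2) * ∏ k ∈ Finset.range n, (x ^ k * (1 + x ^ k)) := by
  induction n with
  | zero => simp
  | succ n ih =>
    have h2 : 2 * (n + 1) = (2 * n + 1) + 1 := by ring
    rw [h2, Finset.prod_range_succ, Finset.prod_range_succ, ih, Finset.prod_range_succ]
    have he0 : (2 * n) % 2 = 0 := by omega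
    have he1 : (2 * n) / 2 = n := by omega
    have ho0 : (2 * n + 1) % 2 = 1 := by omega
    have he : s1a x (2 * n) = x ^ n + x ^ (2 * n) := by simp [s1a, he0, he1]
    have ho : s1a x (2 * n + 1) = x ^ (2 * n + 1) := by simp [s1a, ho0]
    have hp : x ^ ((n + 1) ^ 2) = x ^ (n ^ 2) * x ^ (2 * n + 1) := by
      rw [← pow_add]; ring_nf
    rw [he, ho, hp]
    ring_nf

lemma prod_one_add_pow (m : ℕ) (hpos : 0 < m) (hodd : Odd m) (x : ℂ)
    (hx : IsPrimitiveRoot x m) :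
    ∏ k ∈ Finset.range m, (1 + x ^ k) = 2 := by
  have : NeZero m := ⟨hpos.ne'⟩
  have hpoly := Polynomial.X_pow_sub_one_eq_prod hpos hx
  have heval := congrArg (Polynomial.eval (-1 : ℂ)) hpoly
  simp only [Polynomial.eval_sub, Polynomial.eval_pow, Polynomial.eval_X, Polynomial.eval_one,
    Polynomial.eval_prod, Polynomial.eval_C] at heval
  rw [hodd.neg_one_pow] at heval
  have hbij : ∏ ζ ∈ Polynomial.nthRootsFinset m (1 : ℂ), ((-1 : ℂ) - ζ)
      = ∏ k ∈ Finset.range m, ((-1 : ℂ) - x ^ k) := by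
    refine (Finset.prod_nbij (fun k => x ^ k) ?_ ?_ ?_ (fun _ _ => rfl)).symm
    · intro k hk
      exact (Polynomial.mem_nthRootsFinset hpos (1 : ℂ)).2
        (by rw [← pow_mul, mul_comm, pow_mul, hx.pow_eq_one, one_pow])
    · intro a ha b hb hab
      exact hx.pow_inj (Finset.mem_range.mp ha) (Finset.mem_range.mp hb) hab
    · intro y hy
      obtain ⟨k, hk, hky⟩ := hx.eq_pow_of_pow_eq_one ((Polynomial.mem_nthRootsFinset hpos (1 : ℂ)).1 hy)
      exact ⟨k, Finset.mem_coe.2 (Finset.mem_range.2 hk), hky⟩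
  rw [hbij] at heval
  have h2 : ∏ k ∈ Finset.range m, ((-1 : ℂ) - x ^ k)
      = (-1 : ℂ) ^ m * ∏ k ∈ Finset.range m, (1 + x ^ k) := by
    calc ∏ k ∈ Finset.range m, ((-1 : ℂ) - x ^ k)
        = ∏ k ∈ Finset.range m, (-1 : ℂ) * (1 + x ^ k) :=
          Finset.prod_congr rfl fun k _ => by ring
      _ = (-1 : ℂ) ^ m * ∏ k ∈ Finset.range m, (1 + x ^ k) := by
          rw [Finset.prod_mul_distrib, Finset.prod_const, Finset.card_range]
  rw [h2, hodd.neg_one_pow] at heval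
  linear_combination heval

theorem stmt15 (m : ℕ) (hpos : 0 < m) (hodd : Odd m) (x : ℂ)
    (hx : IsPrimitiveRoot x m) :
    ‖∏ i ∈ Finset.Icc 1 (2 * m - 1), s1a x i‖ = 1 := by
  have habs : ‖x‖ = 1 := hx.norm'_eq_one hpos.ne'
  have h0 : s1a x 0 = 2 := by norm_num [s1a]
  have hIcc : Finset.Icc 1 (2 * m - 1) = Finset.Ico 1 (2 * m) := by
    rw [← Finset.Ico_add_one_right_eq_Icc]
    congr 1
    omega
  have hsplit : ∏ i ∈ Finset.range (2 * m), s1a x i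
      = s1a x 0 * ∏ i ∈ Finset.Ico 1 (2 * m), s1a x i := by
    rw [Finset.range_eq_Ico, Finset.prod_eq_prod_Ico_succ_bot (by omega)]
  have hpr : ∏ k ∈ Finset.range m, (x ^ k * (1 + x ^ k))
      = x ^ (∑ k ∈ Finset.range m, k) * 2 := by
    rw [Finset.prod_mul_distrib, Finset.prod_pow_eq_pow_sum,
      prod_one_add_pow m hpos hodd x hx]
  have hP : ∏ i ∈ Finset.Icc 1 (2 * m - 1), s1a x i
      = x ^ (m ^ 2) * x ^ (∑ k ∈ Finset.range m, k) := by
    apply mul_left_cancel₀ (two_ne_zero (α := ℂ))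
    calc (2 : ℂ) * ∏ i ∈ Finset.Icc 1 (2 * m - 1), s1a x i
        = s1a x 0 * ∏ i ∈ Finset.Ico 1 (2 * m), s1a x i := by rw [h0, hIcc]
      _ = ∏ i ∈ Finset.range (2 * m), s1a x i := hsplit.symm
      _ = x ^ (m ^ 2) * ∏ k ∈ Finset.range m, (x ^ k * (1 + x ^ k)) := s1a_prod_range x m
      _ = 2 * (x ^ (m ^ 2) * x ^ (∑ k ∈ Finset.range m, k)) := by rw [hpr]; ring
  rw [hP, norm_mul, norm_pow, norm_pow, habs, one_pow, one_pow, mul_one]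
end

section
/- Let m be an odd positive integer and let x be a primitive m-th root of unity in ℂ. Then |χ_{2m−1}(x)| = 2, where χ_n(q) = ∏_{i=1}^n a_i(q) and a_{2k-1}(q) = q^{2k-1} + q^{4k-2}, a_{2k}(q) = q^{4k} are the partial numerators of the Ramanujan–Selberg continued fraction S₂. -/
/-- Partial numerators of the Ramanujan–Selberg continued fraction `S₂`:
`a_{2k-1}(q) = q^{2k-1} + q^{4k-2}` and `a_{2k}(q) = q^{4k}`. -/
noncomputable def s2a (q : ℂ) (n : ℕ) : ℂ :=
  if n % 2 = 1 then q ^ n + q ^ (2 * n) else q ^ (2 * n)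

lemma prod_c_sub_aux (m : ℕ) (hpos : 0 < m) {ζ : ℂ} (hζ : IsPrimitiveRoot ζ m) (c : ℂ) :
    ∏ k ∈ Finset.range m, (c - ζ ^ k) = c ^ m - 1 := by
  have himg : Polynomial.nthRootsFinset m (1 : ℂ) = (Finset.range m).image (ζ ^ ·) := by
    symm
    apply Finset.eq_of_subset_of_card_le
    · intro y hy
      simp only [Finset.mem_image, Finset.mem_range] at hy
      obtain ⟨k, _, rfl⟩ := hy
      rw [Polynomial.mem_nthRootsFinset hpos (1 : ℂ), ← pow_mul, mul_comm, pow_mul, hζ.pow_eq_one,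
        one_pow]
    · rw [hζ.card_nthRootsFinset, Finset.card_image_of_injOn, Finset.card_range]
      intro a ha b hb h
      exact hζ.pow_inj (Finset.mem_range.mp ha) (Finset.mem_range.mp hb) h
  have key := congrArg (Polynomial.eval c) (Polynomial.X_pow_sub_one_eq_prod hpos hζ)
  simp only [Polynomial.eval_sub, Polynomial.eval_pow, Polynomial.eval_X, Polynomial.eval_one,
    Polynomial.eval_prod, Polynomial.eval_C, himg] at key
  rw [Finset.prod_image (fun a ha b hb h =>
    hζ.pow_inj (Finset.mem_range.mp ha) (Finset.mem_range.mp hb) h)] at key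
  exact key.symm

lemma prod_one_add_aux (m : ℕ) (hpos : 0 < m) (hodd : Odd m) (x : ℂ)
    (hx : IsPrimitiveRoot x m) :
    ∏ k ∈ Finset.range m, (1 + x ^ (2 * k + 1)) = 2 := by
  have hx0 : x ≠ 0 := hx.ne_zero hpos.ne'
  have hζ : IsPrimitiveRoot (x ^ 2) m := hx.pow_of_coprime 2 (Nat.coprime_two_left.mpr hodd)
  have key := prod_c_sub_aux m hpos hζ (-x⁻¹)
  have hstep : ∀ k ∈ Finset.range m, -x⁻¹ - (x ^ 2) ^ k = -x⁻¹ * (1 + x ^ (2 * k + 1)) := by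
    intro k _
    have : x ^ (2 * k + 1) = (x ^ 2) ^ k * x := by rw [← pow_mul, pow_succ]
    rw [this]
    field_simp
    ring
  rw [Finset.prod_congr rfl hstep, Finset.prod_mul_distrib, Finset.prod_const,
    Finset.card_range] at key
  have h1 : (-x⁻¹) ^ m = -(x ^ m)⁻¹ := by
    rw [hodd.neg_pow, inv_pow]
  rw [h1, hx.pow_eq_one, inv_one] at key
  have : (-1 : ℂ) * ∏ k ∈ Finset.range m, (1 + x ^ (2 * k + 1)) = -1 - 1 := key
  linear_combination -this

lemma sum_odd_aux (n : ℕ) : ∑ k ∈ Finset.range n, (2 * k + 1) = n * n := by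
  induction n with
  | zero => simp
  | succ n ih => rw [Finset.sum_range_succ, ih]; ring

lemma sum_even_aux (n : ℕ) : ∑ k ∈ Finset.range n, (2 * (2 * k + 2)) = 2 * (n * (n + 1)) := by
  induction n with
  | zero => simp
  | succ n ih => rw [Finset.sum_range_succ, ih]; ring

theorem stmt16 (m : ℕ) (hpos : 0 < m) (hodd : Odd m) (x : ℂ)
    (hx : IsPrimitiveRoot x m) :
    ‖∏ i ∈ Finset.Icc 1 (2 * m - 1), s2a x i‖ = 2 := by
  have hset : Finset.Icc 1 (2 * m - 1) =
      ((Finset.range m).image (fun k => 2 * k + 1)) ∪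
      ((Finset.range (m - 1)).image (fun k => 2 * k + 2)) := by
    ext i
    simp only [Finset.mem_Icc, Finset.mem_union, Finset.mem_image, Finset.mem_range]
    constructor
    · intro h
      rcases Nat.even_or_odd i with ⟨k, hk⟩ | ⟨k, hk⟩
      · exact Or.inr ⟨k - 1, by omega, by omega⟩
      · exact Or.inl ⟨k, by omega, by omega⟩
    · rintro (⟨k, hk, rfl⟩ | ⟨k, hk, rfl⟩) <;> omega
  have hdisj : Disjoint ((Finset.range m).image (fun k => 2 * k + 1))
      ((Finset.range (m - 1)).image (fun k => 2 * k + 2)) := by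
    rw [Finset.disjoint_left]
    intro i hi1 hi2
    simp only [Finset.mem_image, Finset.mem_range] at hi1 hi2
    obtain ⟨k, _, rfl⟩ := hi1
    obtain ⟨l, _, hl⟩ := hi2
    omega
  have hinj1 : ∀ a ∈ Finset.range m, ∀ b ∈ Finset.range m,
      2 * a + 1 = 2 * b + 1 → a = b := by intro a _ b _ h; omega
  have hinj2 : ∀ a ∈ Finset.range (m - 1), ∀ b ∈ Finset.range (m - 1),
      2 * a + 2 = 2 * b + 2 → a = b := by intro a _ b _ h; omega
  rw [hset, Finset.prod_union hdisj, Finset.prod_image hinj1, Finset.prod_image hinj2]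
  have hodd' : ∀ k ∈ Finset.range m,
      s2a x (2 * k + 1) = x ^ (2 * k + 1) * (1 + x ^ (2 * k + 1)) := by
    intro k _
    rw [s2a, if_pos (by omega), two_mul, pow_add]
    ring
  have heven' : ∀ k ∈ Finset.range (m - 1),
      s2a x (2 * k + 2) = x ^ (2 * (2 * k + 2)) := by
    intro k _
    rw [s2a, if_neg (by omega)]
  rw [Finset.prod_congr rfl hodd', Finset.prod_congr rfl heven', Finset.prod_mul_distrib,
    Finset.prod_pow_eq_pow_sum, Finset.prod_pow_eq_pow_sum, sum_odd_aux, sum_even_aux,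
    prod_one_add_aux m hpos hodd x hx]
  have h1 : x ^ (m * m) = 1 := by rw [pow_mul, hx.pow_eq_one, one_pow]
  have h2 : x ^ (2 * ((m - 1) * (m - 1 + 1))) = 1 := by
    have : 2 * ((m - 1) * (m - 1 + 1)) = m * (2 * (m - 1)) := by
      obtain ⟨n, rfl⟩ : ∃ n, m = n + 1 := ⟨m - 1, by omega⟩
      simp only [Nat.add_sub_cancel]
      ring
    rw [this, pow_mul, hx.pow_eq_one, one_pow]
  rw [h1, h2]
  simp
end

section
/- Let m be an odd positive integer and let x be a primitive m-th root of unity in ℂ. Then |χ_{m−1}(x)| = 1, where χ_n(q) = ∏_{i=1}^n a_i(q) and a_n(q) = q^n + q^{2n} are the partial numerators of the Ramanujan–Selberg continued fraction S₃. -/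
/-- Partial numerators of the Ramanujan–Selberg continued fraction `S₃`:
`aₙ(q) = q^n + q^{2n}`. -/
noncomputable def s3a (q : ℂ) (n : ℕ) : ℂ := q ^ n + q ^ (2 * n)

theorem stmt17 (m : ℕ) (hpos : 0 < m) (hodd : Odd m) (x : ℂ)
    (hx : IsPrimitiveRoot x m) :
    ‖∏ i ∈ Finset.Icc 1 (m - 1), s3a x i‖ = 1 := by
  classical
  have habs : ‖x‖ = 1 := Complex.norm_eq_one_of_pow_eq_one hx.pow_eq_one hpos.ne'
  -- the nth roots are exactly the powers of x
  have himg : Polynomial.nthRootsFinset m (1 : ℂ) = (Finset.range m).image (x ^ ·) := by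
    apply Finset.eq_of_subset_of_card_le
    · intro ζ hζ
      rw [Polynomial.mem_nthRootsFinset hpos] at hζ
      have : NeZero m := ⟨hpos.ne'⟩
      obtain ⟨i, hi, rfl⟩ := hx.eq_pow_of_pow_eq_one hζ
      exact Finset.mem_image.2 ⟨i, Finset.mem_range.2 hi, rfl⟩
    · rw [hx.card_nthRootsFinset, Finset.card_image_of_injOn
        (fun i hi j hj h => hx.pow_inj (by simpa using hi) (by simpa using hj) h),
        Finset.card_range]
  -- evaluate X^m - 1 = ∏ (X - ζ) at -1
  have hpoly := Polynomial.X_pow_sub_one_eq_prod hpos hx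
  have heval := congrArg (Polynomial.eval (-1 : ℂ)) hpoly
  simp only [Polynomial.eval_sub, Polynomial.eval_pow, Polynomial.eval_X, Polynomial.eval_one,
    Polynomial.eval_prod, Polynomial.eval_sub, Polynomial.eval_C] at heval
  rw [hodd.neg_one_pow] at heval
  have hkey : ∏ ζ ∈ Polynomial.nthRootsFinset m (1 : ℂ), ((-1 : ℂ) - ζ)
      = (-1 : ℂ) ^ (Polynomial.nthRootsFinset m (1 : ℂ)).card
        * ∏ ζ ∈ Polynomial.nthRootsFinset m (1 : ℂ), (1 + ζ) := by
    rw [← Finset.prod_const, ← Finset.prod_mul_distrib]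
    exact Finset.prod_congr rfl fun _ _ => by ring
  rw [hkey, hx.card_nthRootsFinset, hodd.neg_one_pow, neg_one_mul] at heval
  have hprodroots : ∏ ζ ∈ Polynomial.nthRootsFinset m (1 : ℂ), (1 + ζ) = 2 := by
    have := heval.symm
    linear_combination -this
  have hprodrange : ∏ i ∈ Finset.range m, (1 + x ^ i) = 2 := by
    rw [← hprodroots, himg, Finset.prod_image
      (fun i hi j hj h => hx.pow_inj (Finset.mem_range.1 hi) (Finset.mem_range.1 hj) h)]
  -- split off i = 0
  have hsplit : Finset.range m = insert 0 (Finset.Icc 1 (m - 1)) := by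
    ext i
    simp only [Finset.mem_range, Finset.mem_insert, Finset.mem_Icc]
    omega
  rw [hsplit, Finset.prod_insert (by simp), pow_zero] at hprodrange
  have hprodIcc : ∏ i ∈ Finset.Icc 1 (m - 1), (1 + x ^ i) = 1 := by
    have h2ne : ((1:ℂ) + 1) ≠ 0 := by norm_num
    exact mul_left_cancel₀ h2ne (by rw [hprodrange, mul_one]; norm_num)
  -- now the main computation
  have hfac : ∀ i : ℕ, s3a x i = x ^ i * (1 + x ^ i) := by
    intro i
    simp only [s3a, two_mul, pow_add]
    ring
  simp only [hfac]
  rw [Finset.prod_mul_distrib, hprodIcc, mul_one, norm_prod]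
  simp only [norm_pow, habs, one_pow]
  simp
end
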